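/- arXiv:1708.06545 — 2 statements merged into one kernel-verified Lean document; each statement's English description precedes it below -/
import Mathlib

section
/- Let B be an n×n matrix over ℂ (n ≥ 2) and let λ₁, …, λₙ be the roots of the characteristic polynomial of B, listed with multiplicity. Then the following are equivalent: (i) B is invertible and there exist distinct indices i ≠ j with λᵢ + λⱼ = 0; (ii) det(B) ≠ 0 and the restriction of the Lie derivative L_B to the space S₂ of homogeneous degree-2 polynomials in ℂ[x₁,…,xₙ] is not injective (equivalently, the constant coefficient of the characteristic polynomial of L_B restricted to S₂ is zero). -/
open MvPolynomial

/-- The Lie derivative of a polynomial `ψ` along the linear vector field `x ↦ Bx`. -/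
noncomputable def lieDeriv {K : Type*} [CommRing K] {n : ℕ} (B : Matrix (Fin n) (Fin n) K)
    (ψ : MvPolynomial (Fin n) K) : MvPolynomial (Fin n) K :=
  ∑ i, pderiv i ψ * ∑ j, C (B i j) * X j

lemma coeff_pderiv {K : Type*} [CommRing K] {σ : Type*} [DecidableEq σ] (i : σ) (d : σ →₀ ℕ)
    (f : MvPolynomial σ K) :
    coeff d (pderiv i f) = (d i + 1 : ℕ) * coeff (d + Finsupp.single i 1) f := by
  induction f using MvPolynomial.induction_on' with
  | monomial s a =>
    rw [pderiv_monomial, coeff_monomial, coeff_monomial]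
    by_cases h : s = d + Finsupp.single i 1
    · subst h
      have h1 : d + Finsupp.single i 1 - Finsupp.single i 1 = d := by
        ext j; simp [Finsupp.single_apply]
      have h2 : ((d + Finsupp.single i 1 : σ →₀ ℕ)) i = d i + 1 := by simp
      rw [if_pos h1, h2, if_pos rfl]
      push_cast; ring
    · rw [if_neg h]
      by_cases hs : s i = 0
      · by_cases h' : s - Finsupp.single i 1 = d
        · simp [h', hs]
        · simp [h', hs]
      · have hle : Finsupp.single i 1 ≤ s := by
          rw [Finsupp.single_le_iff]; omega
        by_cases h' : s - Finsupp.single i 1 = d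
        · exfalso; apply h
          rw [← h', tsub_add_cancel_of_le hle]
        · simp [h']
  | add p q hp hq => simp [map_add, hp, hq, mul_add]

lemma weight_one_single {σ : Type*} (i : σ) :
    (Finsupp.weight (1 : σ → ℕ)) (Finsupp.single i 1) = 1 := by
  classical
  simp [Finsupp.weight_apply, Finsupp.sum_single_index]

lemma pderiv_isHomogeneous {K : Type*} [CommRing K] {σ : Type*} [DecidableEq σ]
    {f : MvPolynomial σ K} {m : ℕ} (hf : f.IsHomogeneous (m + 1)) (i : σ) :
    (pderiv i f).IsHomogeneous m := by
  intro d hd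
  rw [_root_.coeff_pderiv] at hd
  have h2 : coeff (d + Finsupp.single i 1) f ≠ 0 := by
    intro h; rw [h, mul_zero] at hd; exact hd rfl
  have h3 := hf h2
  rw [map_add, weight_one_single] at h3
  omega

lemma eq_C_of_isHomogeneous_zero {K : Type*} [CommRing K] {σ : Type*}
    {f : MvPolynomial σ K} (hf : f.IsHomogeneous 0) : f = C (coeff 0 f) := by
  classical
  ext d
  by_cases hd : d = 0
  · subst hd; simp
  · rw [MvPolynomial.coeff_C, if_neg (Ne.symm hd)]
    by_contra h
    apply hd
    have := hf h
    rw [Pi.one_def] at this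
    rwa [← Finsupp.degree_eq_weight_one, Finsupp.degree_eq_zero_iff] at this

lemma degree_step {σ : Type*} [DecidableEq σ] {d : σ →₀ ℕ} {m : ℕ}
    (h : Finsupp.degree d = m + 1) :
    ∃ (k : σ) (e : σ →₀ ℕ), d = Finsupp.single k 1 + e ∧ Finsupp.degree e = m := by
  have hd0 : d ≠ 0 := by
    intro h0; rw [h0, map_zero] at h; omega
  obtain ⟨k, hk⟩ : ∃ k, d k ≠ 0 := by
    by_contra h0
    push_neg at h0
    exact hd0 (Finsupp.ext fun a => h0 a)
  refine ⟨k, d - Finsupp.single k 1, ?_, ?_⟩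
  · have hle : Finsupp.single k 1 ≤ d := by rw [Finsupp.single_le_iff]; omega
    rw [add_comm, tsub_add_cancel_of_le hle]
  · have hle : Finsupp.single k 1 ≤ d := by rw [Finsupp.single_le_iff]; omega
    have hadd : Finsupp.single k 1 + (d - Finsupp.single k 1) = d := by
      rw [add_comm, tsub_add_cancel_of_le hle]
    have := congrArg Finsupp.degree hadd
    rw [Finsupp.degree_eq_weight_one] at this h ⊢
    rw [show (fun _ => 1 : σ → ℕ) = 1 from rfl] at this h ⊢
    rw [map_add, weight_one_single] at this
    omega

lemma degree_two_decomp {σ : Type*} [DecidableEq σ] {d : σ →₀ ℕ}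
    (h : Finsupp.degree d = 2) :
    ∃ k l, d = Finsupp.single k 1 + Finsupp.single l 1 := by
  obtain ⟨k, e, rfl, he⟩ := degree_step (m := 1) h
  obtain ⟨l, e', rfl, he'⟩ := degree_step (m := 0) he
  rw [Finsupp.degree_eq_zero_iff] at he'
  exact ⟨k, l, by rw [he', add_zero]⟩

noncomputable def lin {K : Type*} [CommRing K] {n : ℕ} (u : Fin n → K) :
    MvPolynomial (Fin n) K := ∑ k, C (u k) * X k

lemma lieDeriv_mul {K : Type*} [CommRing K] {n : ℕ} (B : Matrix (Fin n) (Fin n) K)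
    (f g : MvPolynomial (Fin n) K) :
    lieDeriv B (f * g) = lieDeriv B f * g + f * lieDeriv B g := by
  simp only [lieDeriv, pderiv_mul, add_mul]
  rw [Finset.sum_add_distrib, Finset.sum_mul, Finset.mul_sum]
  congr 1
  · exact Finset.sum_congr rfl fun i _ => by ring
  · exact Finset.sum_congr rfl fun i _ => by ring

lemma pderiv_lin {K : Type*} [CommRing K] {n : ℕ} (u : Fin n → K) (i : Fin n) :
    pderiv i (lin u) = C (u i) := by
  classical
  simp only [lin, map_sum, pderiv_C_mul, pderiv_X]
  rw [Finset.sum_eq_single i]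
  · simp
  · intro b _ hb; simp [Pi.single_eq_of_ne hb]
  · simp

lemma lieDeriv_lin {K : Type*} [CommRing K] {n : ℕ} (B : Matrix (Fin n) (Fin n) K)
    (u : Fin n → K) : lieDeriv B (lin u) = lin (B.transpose.mulVec u) := by
  simp only [lieDeriv, pderiv_lin, Finset.mul_sum]
  rw [Finset.sum_comm]
  simp only [lin, Matrix.mulVec, dotProduct, Matrix.transpose_apply, map_sum]
  refine Finset.sum_congr rfl fun j _ => ?_
  rw [Finset.sum_mul]
  refine Finset.sum_congr rfl fun i _ => ?_
  rw [map_mul]; ring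

lemma coeff_lin {K : Type*} [CommRing K] {n : ℕ} (u : Fin n → K) (k : Fin n) :
    coeff (Finsupp.single k 1) (lin u) = u k := by
  classical
  simp only [lin, MvPolynomial.coeff_sum, MvPolynomial.coeff_C_mul, MvPolynomial.coeff_X']
  rw [Finset.sum_eq_single k]
  · simp
  · intro b _ hb
    rw [if_neg, mul_zero]
    exact fun h => hb ((Finsupp.single_left_inj one_ne_zero).mp h)
  · simp

lemma lin_ne_zero {K : Type*} [CommRing K] {n : ℕ} {u : Fin n → K} (hu : u ≠ 0) :
    lin u ≠ 0 := by
  obtain ⟨k, hk⟩ : ∃ k, u k ≠ 0 := by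
    by_contra h; push_neg at h; exact hu (funext h)
  intro h
  apply hk
  rw [← coeff_lin u k, h, MvPolynomial.coeff_zero]

lemma lin_isHomogeneous {K : Type*} [CommRing K] {n : ℕ} (u : Fin n → K) :
    (lin u).IsHomogeneous 1 :=
  MvPolynomial.IsHomogeneous.sum _ _ _ fun k _ => MvPolynomial.isHomogeneous_C_mul_X _ _

lemma lin_smul {K : Type*} [CommRing K] {n : ℕ} (c : K) (u : Fin n → K) :
    lin (c • u) = C c * lin u := by
  simp only [lin, Finset.mul_sum, Pi.smul_apply, smul_eq_mul, map_mul, mul_assoc]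

lemma charpoly_eval {n : ℕ} (B : Matrix (Fin n) (Fin n) ℂ) (c : ℂ) :
    B.charpoly.eval c = (c • (1 : Matrix (Fin n) (Fin n) ℂ) - B).det := by
  rw [Matrix.charpoly, ← Polynomial.coe_evalRingHom, RingHom.map_det]
  congr 1
  ext i j
  by_cases h : i = j <;>
    simp [Matrix.charmatrix_apply, h, Matrix.one_apply, Matrix.diagonal_apply]

lemma exists_eigenvector_transpose {n : ℕ} (B : Matrix (Fin n) (Fin n) ℂ) (c : ℂ)
    (h : B.charpoly.eval c = 0) :
    ∃ u : Fin n → ℂ, u ≠ 0 ∧ B.transpose.mulVec u = c • u := by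
  rw [charpoly_eval] at h
  have h2 : (c • (1 : Matrix (Fin n) (Fin n) ℂ) - B).transpose.det = 0 := by
    rw [Matrix.det_transpose]; exact h
  rw [Matrix.transpose_sub, Matrix.transpose_smul, Matrix.transpose_one] at h2
  obtain ⟨u, hu, hmul⟩ := (Matrix.exists_mulVec_eq_zero_iff).mpr h2
  refine ⟨u, hu, ?_⟩
  rw [Matrix.sub_mulVec, Matrix.smul_mulVec, Matrix.one_mulVec, sub_eq_zero] at hmul
  rw [← hmul]

lemma forward_dir {n : ℕ} (B : Matrix (Fin n) (Fin n) ℂ) (lam : Fin n → ℂ)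
    (hroots : B.charpoly = ∏ i, (Polynomial.X - Polynomial.C (lam i)))
    {i j : Fin n} (hsum : lam i + lam j = 0) :
    ∃ ψ : MvPolynomial (Fin n) ℂ, ψ.IsHomogeneous 2 ∧ ψ ≠ 0 ∧ lieDeriv B ψ = 0 := by
  have heval : ∀ k : Fin n, B.charpoly.eval (lam k) = 0 := by
    intro k
    rw [hroots, Polynomial.eval_prod]
    exact Finset.prod_eq_zero (Finset.mem_univ k) (by simp)
  obtain ⟨u, hu, hBu⟩ := exists_eigenvector_transpose B (lam i) (heval i)
  obtain ⟨v, hv, hBv⟩ := exists_eigenvector_transpose B (lam j) (heval j)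
  refine ⟨lin u * lin v, ?_, ?_, ?_⟩
  · exact (lin_isHomogeneous u).mul (lin_isHomogeneous v)
  · exact mul_ne_zero (lin_ne_zero hu) (lin_ne_zero hv)
  · rw [lieDeriv_mul, lieDeriv_lin, lieDeriv_lin, hBu, hBv, lin_smul, lin_smul]
    have : (C (lam i) * lin u) * lin v + lin u * (C (lam j) * lin v)
        = C (lam i + lam j) * (lin u * lin v) := by rw [map_add]; ring
    rw [this, hsum, map_zero, zero_mul]

lemma aeval_transpose {n : ℕ} (B : Matrix (Fin n) (Fin n) ℂ) (p : Polynomial ℂ) :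
    Polynomial.aeval B.transpose p = (Polynomial.aeval B p).transpose := by
  induction p using Polynomial.induction_on' with
  | add p q hp hq => rw [map_add, map_add, hp, hq, Matrix.transpose_add]
  | monomial k a =>
    rw [Polynomial.aeval_monomial, Polynomial.aeval_monomial, Matrix.transpose_mul,
      Matrix.transpose_pow]
    have h1 : ((algebraMap ℂ (Matrix (Fin n) (Fin n) ℂ)) a).transpose
        = (algebraMap ℂ (Matrix (Fin n) (Fin n) ℂ)) a := by
      rw [Algebra.algebraMap_eq_smul_one, Matrix.transpose_smul, Matrix.transpose_one]
    rw [h1, Algebra.commutes]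

lemma pow_sylvester {n : ℕ} {A C S : Matrix (Fin n) (Fin n) ℂ} (h : A * S = S * C) (m : ℕ) :
    A ^ m * S = S * C ^ m := by
  induction m with
  | zero => simp
  | succ m ih =>
    rw [pow_succ, pow_succ, mul_assoc, h, ← mul_assoc, ih, mul_assoc]

lemma aeval_sylvester {n : ℕ} {A C S : Matrix (Fin n) (Fin n) ℂ} (h : A * S = S * C)
    (p : Polynomial ℂ) :
    Polynomial.aeval A p * S = S * Polynomial.aeval C p := by
  induction p using Polynomial.induction_on' with
  | add p q hp hq => rw [map_add, map_add, add_mul, mul_add, hp, hq]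
  | monomial k a =>
    rw [Polynomial.aeval_monomial, Polynomial.aeval_monomial, mul_assoc,
      pow_sylvester h, ← mul_assoc, Algebra.commutes, mul_assoc]

lemma det_aeval_prod {n : ℕ} (M : Matrix (Fin n) (Fin n) ℂ) (lam : Fin n → ℂ)
    (s : Finset (Fin n)) :
    (Polynomial.aeval M (∏ i ∈ s, (Polynomial.X - Polynomial.C (lam i)))).det
      = ∏ i ∈ s, (M - lam i • 1).det := by
  classical
  induction s using Finset.induction_on with
  | empty => simp
  | insert a s' hx ih =>
    rw [Finset.prod_insert hx, Finset.prod_insert hx, map_mul, Matrix.det_mul, ih]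
    congr 1
    rw [map_sub, Polynomial.aeval_X, Polynomial.aeval_C, Algebra.algebraMap_eq_smul_one]

section Backward

variable {n : ℕ}

lemma second_deriv_eq_C {ψ : MvPolynomial (Fin n) ℂ} (hψ : ψ.IsHomogeneous 2) (k l : Fin n) :
    pderiv l (pderiv k ψ) = C (coeff 0 (pderiv l (pderiv k ψ))) := by
  have h1 : (pderiv k ψ).IsHomogeneous 1 := pderiv_isHomogeneous (m := 1) hψ k
  have h0 : (pderiv l (pderiv k ψ)).IsHomogeneous 0 := pderiv_isHomogeneous (m := 0) h1 l
  exact eq_C_of_isHomogeneous_zero h0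

lemma q_eq_coeff {ψ : MvPolynomial (Fin n) ℂ} (k l : Fin n) :
    coeff 0 (pderiv l (pderiv k ψ))
      = ((Finsupp.single l 1 : Fin n →₀ ℕ) k + 1 : ℕ)
        * coeff (Finsupp.single l 1 + Finsupp.single k 1) ψ := by
  rw [_root_.coeff_pderiv, _root_.coeff_pderiv]
  simp

lemma q_symm {ψ : MvPolynomial (Fin n) ℂ} (k l : Fin n) :
    coeff 0 (pderiv l (pderiv k ψ)) = coeff 0 (pderiv k (pderiv l ψ)) := by
  by_cases h : k = l
  · subst h; rfl
  · rw [q_eq_coeff, q_eq_coeff, Finsupp.single_apply, Finsupp.single_apply,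
      if_neg (fun hh => h hh.symm), if_neg (fun hh => h hh), add_comm (Finsupp.single l 1)]

lemma q_ne_zero {ψ : MvPolynomial (Fin n) ℂ} (hψ : ψ.IsHomogeneous 2) (hne : ψ ≠ 0) :
    ∃ k l, coeff 0 (pderiv l (pderiv k ψ)) ≠ 0 := by
  obtain ⟨d, hd⟩ : ∃ d, coeff d ψ ≠ 0 := by
    by_contra h; push_neg at h
    exact hne (MvPolynomial.ext _ _ fun d => by rw [h d, MvPolynomial.coeff_zero])
  have hdeg : Finsupp.degree d = 2 := by
    rw [Finsupp.degree_eq_weight_one]; exact hψ hd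
  obtain ⟨k, l, rfl⟩ := degree_two_decomp hdeg
  refine ⟨l, k, ?_⟩
  rw [q_eq_coeff]
  exact mul_ne_zero (Nat.cast_ne_zero.mpr (by omega)) hd

end Backward

section Key

variable {n : ℕ} (B : Matrix (Fin n) (Fin n) ℂ) {ψ : MvPolynomial (Fin n) ℂ}

lemma lieDeriv_eq_sum_lin (ψ : MvPolynomial (Fin n) ℂ) :
    lieDeriv B ψ = ∑ i, pderiv i ψ * lin (B i) := rfl

lemma key_identity (hψ : ψ.IsHomogeneous 2) (hL : lieDeriv B ψ = 0) (k l : Fin n) :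
    (∑ i, (coeff 0 (pderiv k (pderiv i ψ)) * B i l
      + coeff 0 (pderiv l (pderiv i ψ)) * B i k)) = 0 := by
  set q : Fin n → Fin n → ℂ := fun i k => coeff 0 (pderiv k (pderiv i ψ)) with hq
  have h2nd : ∀ i k, pderiv k (pderiv i ψ) = C (q i k) := fun i k => second_deriv_eq_C hψ i k
  have h0 : pderiv l (pderiv k (lieDeriv B ψ)) = 0 := by rw [hL]; simp
  have e1 : pderiv k (lieDeriv B ψ)
      = ∑ i, (C (q i k) * lin (B i) + pderiv i ψ * C (B i k)) := by
    rw [lieDeriv_eq_sum_lin, map_sum]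
    refine Finset.sum_congr rfl fun i _ => ?_
    rw [pderiv_mul, pderiv_lin, h2nd i k]
  have e2 : pderiv l (pderiv k (lieDeriv B ψ))
      = ∑ i, (C (q i k) * C (B i l) + C (q i l) * C (B i k)) := by
    rw [e1, map_sum]
    refine Finset.sum_congr rfl fun i _ => ?_
    rw [map_add, pderiv_mul, pderiv_mul, pderiv_C, pderiv_lin, pderiv_C, h2nd i l]
    ring
  rw [h0] at e2
  have e3 : (C (∑ i, (q i k * B i l + q i l * B i k)) : MvPolynomial (Fin n) ℂ)
      = C (0 : ℂ) := by
    rw [map_sum, map_zero, e2]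
    exact Finset.sum_congr rfl fun i _ => by rw [map_add, map_mul, map_mul]
  exact MvPolynomial.C_injective _ _ e3

end Key

lemma sylvester_step {n : ℕ} (B : Matrix (Fin n) (Fin n) ℂ) {S : Matrix (Fin n) (Fin n) ℂ}
    (hSsymm : ∀ k l, S k l = S l k)
    (hkey : ∀ k l, (∑ i, (S i k * B i l + S i l * B i k)) = 0) :
    B.transpose * S = S * (-B) := by
  ext k l
  rw [Matrix.mul_apply, Matrix.mul_apply]
  have hk := hkey k l
  rw [Finset.sum_add_distrib] at hk
  have e1 : ∑ i, B.transpose k i * S i l = ∑ i, S i l * B i k :=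
    Finset.sum_congr rfl fun i _ => by rw [Matrix.transpose_apply, mul_comm]
  have e2 : ∑ i, S k i * (-B) i l = ∑ i, -(S i k * B i l) :=
    Finset.sum_congr rfl fun i _ => by rw [Matrix.neg_apply, hSsymm k i]; ring
  rw [e1, e2, Finset.sum_neg_distrib]
  linear_combination hk

lemma backward_dir {n : ℕ} (B : Matrix (Fin n) (Fin n) ℂ) (lam : Fin n → ℂ)
    (hroots : B.charpoly = ∏ i, (Polynomial.X - Polynomial.C (lam i)))
    (hdet : B.det ≠ 0) {ψ : MvPolynomial (Fin n) ℂ}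
    (hψ : ψ.IsHomogeneous 2) (hne : ψ ≠ 0) (hL : lieDeriv B ψ = 0) :
    ∃ i j : Fin n, i ≠ j ∧ lam i + lam j = 0 := by
  -- all eigenvalues are nonzero
  have hlam : ∀ j, lam j ≠ 0 := by
    have h1 : B.charpoly.eval 0 = ((0 : ℂ) • (1 : Matrix (Fin n) (Fin n) ℂ) - B).det :=
      charpoly_eval B 0
    rw [zero_smul, zero_sub, Matrix.det_neg] at h1
    have h2 : B.charpoly.eval 0 ≠ 0 := by
      rw [h1]
      exact mul_ne_zero (pow_ne_zero _ (neg_ne_zero.mpr one_ne_zero)) hdet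
    rw [hroots, Polynomial.eval_prod] at h2
    intro j hj
    apply h2
    refine Finset.prod_eq_zero (Finset.mem_univ j) ?_
    simp [hj]
  -- the symmetric matrix of second derivatives
  obtain ⟨k₀, l₀, hkl⟩ := q_ne_zero hψ hne
  have hsyl : B.transpose * (Matrix.of fun k l => coeff 0 (pderiv l (pderiv k ψ)))
      = (Matrix.of fun k l => coeff 0 (pderiv l (pderiv k ψ))) * (-B) := by
    refine sylvester_step B (fun k l => q_symm k l) (fun k l => ?_)
    exact key_identity B hψ hL k l
  have hS0 : (Matrix.of fun k l => coeff 0 (pderiv l (pderiv k ψ)))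
      ≠ (0 : Matrix (Fin n) (Fin n) ℂ) := by
    intro h
    apply hkl
    exact congrFun (congrFun h k₀) l₀
  -- kill the characteristic polynomial
  have hCH : Polynomial.aeval B.transpose B.charpoly = 0 := by
    rw [aeval_transpose, Matrix.aeval_self_charpoly, Matrix.transpose_zero]
  have hpoly : (Matrix.of fun k l => coeff 0 (pderiv l (pderiv k ψ)))
      * Polynomial.aeval (-B) B.charpoly = 0 := by
    rw [← aeval_sylvester hsyl, hCH, zero_mul]
  have hdet0 : (Polynomial.aeval (-B) B.charpoly).det = 0 := by
    by_contra h
    have hu : IsUnit (Polynomial.aeval (-B) B.charpoly) :=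
      (Matrix.isUnit_iff_isUnit_det _).mpr (isUnit_iff_ne_zero.mpr h)
    obtain ⟨u, hu⟩ := hu
    apply hS0
    have h2 : (Matrix.of fun k l => coeff 0 (pderiv l (pderiv k ψ)))
        * (Polynomial.aeval (-B) B.charpoly * (↑u⁻¹ : Matrix (Fin n) (Fin n) ℂ)) = 0 := by
      rw [← mul_assoc, hpoly, zero_mul]
    rwa [← hu, Units.mul_inv, mul_one] at h2
  rw [hroots, det_aeval_prod] at hdet0
  obtain ⟨i, _, hi⟩ := Finset.prod_eq_zero_iff.mp hdet0
  -- translate back to the eigenvalues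
  have heval : B.charpoly.eval (-lam i) = 0 := by
    rw [charpoly_eval]
    have hcomm : (-lam i) • (1 : Matrix (Fin n) (Fin n) ℂ) - B = -B - lam i • 1 := by
      rw [neg_smul]; abel
    rw [hcomm, hi]
  rw [hroots, Polynomial.eval_prod] at heval
  obtain ⟨j, _, hj⟩ := Finset.prod_eq_zero_iff.mp heval
  rw [Polynomial.eval_sub, Polynomial.eval_X, Polynomial.eval_C] at hj
  refine ⟨i, j, ?_, by linear_combination -hj⟩
  intro hij
  subst hij
  apply hlam i
  have h2 : (2 : ℂ) * lam i = 0 := by linear_combination -hj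
  have h3 : (2 : ℂ) ≠ 0 := two_ne_zero
  exact (mul_eq_zero.mp h2).resolve_left h3

/-- Let `λ₁, …, λₙ` be the roots (with multiplicity) of the characteristic polynomial of
`B : Matrix (Fin n) (Fin n) ℂ` (`n ≥ 2`). Then `B` is invertible and admits a pair of
eigenvalues (at distinct indices) adding up to zero if and only if `det B ≠ 0` and the
restriction of `L_B` to the homogeneous degree-2 polynomials is not injective (i.e. some
nonzero homogeneous degree-2 polynomial is annihilated by `L_B`). -/
theorem invertible_and_eigenpair_iff_lieDeriv_not_injective {n : ℕ} (hn : 2 ≤ n)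
    (B : Matrix (Fin n) (Fin n) ℂ) (lam : Fin n → ℂ)
    (hroots : B.charpoly = ∏ i, (Polynomial.X - Polynomial.C (lam i))) :
    (IsUnit B ∧ ∃ i j : Fin n, i ≠ j ∧ lam i + lam j = 0) ↔
      (B.det ≠ 0 ∧ ∃ ψ : MvPolynomial (Fin n) ℂ,
        ψ.IsHomogeneous 2 ∧ ψ ≠ 0 ∧ lieDeriv B ψ = 0) := by
  constructor
  · rintro ⟨hB, i, j, hij, hsum⟩
    have hdet : B.det ≠ 0 := isUnit_iff_ne_zero.mp ((Matrix.isUnit_iff_isUnit_det B).mp hB)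
    exact ⟨hdet, forward_dir B lam hroots hsum⟩
  · rintro ⟨hdet, ψ, hψ, hne, hL⟩
    exact ⟨(Matrix.isUnit_iff_isUnit_det B).mpr (isUnit_iff_ne_zero.mpr hdet),
      backward_dir B lam hroots hdet hψ hne hL⟩
end

section
/- Let q ∈ ℝ[X] be a monic polynomial of degree n − 2 (n ≥ 2), let b ∈ ℝ, and set χ := q · (X² + b) ∈ ℝ[X]. Then the following are equivalent: (i) every complex root of χ has real part ≤ 0, χ(0) ≠ 0, and the roots of χ with real part equal to 0 are exactly one conjugate pair of simple, nonzero, purely imaginary roots; (ii) b > 0 and every complex root of q has real part < 0. -/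
open Polynomial

/-- Let `q` be a real monic polynomial of degree `n − 2` (`n ≥ 2`), `b ∈ ℝ`, and
`χ = q·(X² + b)`. Then: every complex root of `χ` has real part `≤ 0`, `χ(0) ≠ 0`, and the
roots of `χ` with real part `0` are exactly one conjugate pair of simple, nonzero, purely
imaginary roots, if and only if `b > 0` and every complex root of `q` has real part `< 0`. -/
theorem roots_re_nonpos_with_imaginary_pair_iff {n : ℕ} (hn : 2 ≤ n) (q : Polynomial ℝ)
    (hq : q.Monic) (hdeg : q.natDegree = n - 2) (b : ℝ)
    (χ : Polynomial ℝ) (hχ : χ = q * (X ^ 2 + Polynomial.C b)) :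
    ((∀ z : ℂ, Polynomial.aeval z χ = 0 → z.re ≤ 0) ∧ χ.eval 0 ≠ 0 ∧
      ∃ ω : ℝ, 0 < ω ∧
        (∀ z : ℂ, (Polynomial.aeval z χ = 0 ∧ z.re = 0) ↔
          (z = Complex.I * ω ∨ z = -(Complex.I * ω))) ∧
        (χ.map (algebraMap ℝ ℂ)).rootMultiplicity (Complex.I * ω) = 1 ∧
        (χ.map (algebraMap ℝ ℂ)).rootMultiplicity (-(Complex.I * ω)) = 1) ↔
    (0 < b ∧ ∀ z : ℂ, Polynomial.aeval z q = 0 → z.re < 0) := by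
  have hq0 : q ≠ 0 := hq.ne_zero
  have hqm0 : q.map (algebraMap ℝ ℂ) ≠ 0 := (hq.map _).ne_zero
  have haeval : ∀ z : ℂ, (Polynomial.aeval z χ) = Polynomial.aeval z q * (z ^ 2 + (b : ℂ)) := by
    intro z
    rw [hχ]
    simp [Complex.coe_algebraMap]
  have hroot : ∀ (p : Polynomial ℝ) (z : ℂ),
      (p.map (algebraMap ℝ ℂ)).IsRoot z ↔ Polynomial.aeval z p = 0 := by
    intro p z
    rw [IsRoot, eval_map, aeval_def]
  constructor
  · rintro ⟨h1, h2, ω, hω, hiff, hm1, hm2⟩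
    -- first, b > 0
    have hb : 0 < b := by
      rcases lt_trichotomy b 0 with hb | hb | hb
      · exfalso
        set r := Real.sqrt (-b) with hr
        have hrpos : 0 < r := Real.sqrt_pos.2 (by linarith)
        have hr2 : r ^ 2 = -b := Real.sq_sqrt (by linarith)
        have hz : Polynomial.aeval (r : ℂ) χ = 0 := by
          rw [haeval]
          have : ((r : ℂ)) ^ 2 + (b : ℂ) = 0 := by
            rw [← Complex.ofReal_pow, hr2]; push_cast; ring
          rw [this, mul_zero]
        have := h1 _ hz
        simp at this
        linarith
      · exact absurd (by rw [hχ]; simp [hb]) h2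
      · exact hb
    -- ω² = b
    have hsb : 0 < Real.sqrt b := Real.sqrt_pos.2 hb
    have hsb2 : Real.sqrt b ^ 2 = b := Real.sq_sqrt hb.le
    have hzs : Polynomial.aeval (Complex.I * (Real.sqrt b : ℂ)) χ = 0 := by
      rw [haeval]
      have : (Complex.I * (Real.sqrt b : ℂ)) ^ 2 + (b : ℂ) = 0 := by
        rw [mul_pow, Complex.I_sq]
        rw [← Complex.ofReal_pow, hsb2]; ring
      rw [this, mul_zero]
    have hwb : ω ^ 2 = b := by
      rcases (hiff _).1 ⟨hzs, by simp⟩ with h | h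
      · have : (Real.sqrt b : ℂ) = (ω : ℂ) := mul_left_cancel₀ Complex.I_ne_zero h
        have : Real.sqrt b = ω := by exact_mod_cast this
        rw [← this, hsb2]
      · have : (Real.sqrt b : ℂ) = -(ω : ℂ) := by
          have := mul_left_cancel₀ Complex.I_ne_zero (by rw [h]; ring : Complex.I * (Real.sqrt b : ℂ) = Complex.I * (-(ω:ℂ)))
          exact this
        have : Real.sqrt b = -ω := by exact_mod_cast this
        linarith
    refine ⟨hb, fun z hz => ?_⟩
    have hzχ : Polynomial.aeval z χ = 0 := by rw [haeval, hz, zero_mul]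
    rcases (h1 z hzχ).lt_or_eq with h | h
    · exact h
    · exfalso
      -- z = ±iω, leading to multiplicity ≥ 2
      have hquad : ∀ w : ℂ, (w = Complex.I * ω ∨ w = -(Complex.I * ω)) →
          Polynomial.aeval w ((X : Polynomial ℝ) ^ 2 + C b) = 0 := by
        have hc : ((ω : ℂ)) ^ 2 = (b : ℂ) := by
          rw [← Complex.ofReal_pow, hwb]
        rintro w (rfl | rfl) <;>
        · simp only [map_add, map_pow, aeval_X, aeval_C, Complex.coe_algebraMap]
          linear_combination (ω:ℂ) ^ 2 * Complex.I_sq - hc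
      have hquadm0 : (((X : Polynomial ℝ) ^ 2 + C b).map (algebraMap ℝ ℂ)) ≠ 0 :=
        ((monic_X_pow_add_C b two_ne_zero).map _).ne_zero
      have hmul : ∀ w : ℂ, rootMultiplicity w (χ.map (algebraMap ℝ ℂ)) =
          rootMultiplicity w (q.map (algebraMap ℝ ℂ)) +
          rootMultiplicity w (((X : Polynomial ℝ) ^ 2 + C b).map (algebraMap ℝ ℂ)) := by
        intro w
        rw [hχ, Polynomial.map_mul, rootMultiplicity_mul (mul_ne_zero hqm0 hquadm0)]
      have hcase := (hiff z).1 ⟨hzχ, h⟩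
      have hq1 : 1 ≤ rootMultiplicity z (q.map (algebraMap ℝ ℂ)) :=
        (rootMultiplicity_pos hqm0).2 ((hroot q z).2 hz)
      have hq2 : 1 ≤ rootMultiplicity z (((X : Polynomial ℝ) ^ 2 + C b).map (algebraMap ℝ ℂ)) :=
        (rootMultiplicity_pos hquadm0).2 ((hroot _ z).2 (hquad z hcase))
      rcases hcase with rfl | rfl
      · rw [hmul] at hm1; omega
      · rw [hmul] at hm2; omega
  · rintro ⟨hb, hroots⟩
    set s := Real.sqrt b with hs
    have hs0 : 0 < s := Real.sqrt_pos.2 hb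
    have hs2 : s ^ 2 = b := Real.sq_sqrt hb.le
    have hsc : ((s : ℂ)) ^ 2 = (b : ℂ) := by rw [← Complex.ofReal_pow, hs2]
    have hfac : ∀ z : ℂ, z ^ 2 + (b : ℂ) = (z - Complex.I * s) * (z + Complex.I * s) := by
      intro z
      linear_combination (s : ℂ) ^ 2 * Complex.I_sq - hsc
    have hIs0 : Complex.I * (s : ℂ) ≠ 0 :=
      mul_ne_zero Complex.I_ne_zero (by exact_mod_cast hs0.ne')
    have hre0 : (Complex.I * (s : ℂ)).re = 0 := by simp
    have hre0' : (-(Complex.I * (s : ℂ))).re = 0 := by simp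
    refine ⟨?_, ?_, s, hs0, ?_, ?_, ?_⟩
    · intro z hz
      rw [haeval] at hz
      rcases mul_eq_zero.1 hz with h | h
      · exact (hroots z h).le
      · rw [hfac] at h
        rcases mul_eq_zero.1 h with h | h
        · rw [sub_eq_zero.1 h]; simp
        · rw [eq_neg_of_add_eq_zero_left h]; simp
    · rw [hχ]
      simp only [eval_mul, eval_add, eval_pow, eval_X, eval_C]
      have hq00 : q.eval 0 ≠ 0 := by
        intro h0
        have : Polynomial.aeval (0 : ℂ) q = 0 := by
          rw [aeval_def, eval₂_at_zero, coeff_zero_eq_eval_zero, h0, map_zero]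
        simpa using hroots 0 this
      exact mul_ne_zero hq00 (by simpa using hb.ne')
    · intro z
      constructor
      · rintro ⟨hz, hre⟩
        rw [haeval] at hz
        rcases mul_eq_zero.1 hz with h | h
        · exact absurd hre (hroots z h).ne
        · rw [hfac] at h
          rcases mul_eq_zero.1 h with h | h
          · exact Or.inl (sub_eq_zero.1 h)
          · exact Or.inr (eq_neg_of_add_eq_zero_left h)
      · rintro (rfl | rfl)
        · exact ⟨by rw [haeval, hfac]; ring, hre0⟩
        · exact ⟨by rw [haeval, hfac]; ring, hre0'⟩
    all_goals {
      have hmapfac : χ.map (algebraMap ℝ ℂ) =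
          q.map (algebraMap ℝ ℂ) *
            ((X - C (Complex.I * s)) * (X + C (Complex.I * s))) := by
        rw [hχ, Polynomial.map_mul]
        congr 1
        rw [Polynomial.map_add, Polynomial.map_pow, map_X, map_C]
        have h2 : (C (Complex.I * (s : ℂ))) ^ 2 = -C ((algebraMap ℝ ℂ) b) := by
          rw [← map_pow, ← map_neg]
          congr 1
          rw [mul_pow, Complex.I_sq, hsc]
          simp [Complex.coe_algebraMap]
        linear_combination h2
      have hx1 : ((X : Polynomial ℂ) - C (Complex.I * s)) ≠ 0 := X_sub_C_ne_zero _
      have hx2 : ((X : Polynomial ℂ) + C (Complex.I * s)) ≠ 0 := by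
        have h3 : ((X : Polynomial ℂ) + C (Complex.I * s)) = X - C (-(Complex.I * s)) := by
          rw [map_neg, sub_neg_eq_add]
        rw [h3]; exact X_sub_C_ne_zero _
      have hqnr1 : rootMultiplicity (Complex.I * (s : ℂ)) (q.map (algebraMap ℝ ℂ)) = 0 := by
        apply rootMultiplicity_eq_zero
        rw [hroot]
        intro h
        exact absurd hre0 (hroots _ h).ne
      have hqnr2 : rootMultiplicity (-(Complex.I * (s : ℂ))) (q.map (algebraMap ℝ ℂ)) = 0 := by
        apply rootMultiplicity_eq_zero
        rw [hroot]
        intro h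
        exact absurd hre0' (hroots _ h).ne
      have hplus1 : rootMultiplicity (Complex.I * (s : ℂ))
          ((X : Polynomial ℂ) + C (Complex.I * s)) = 0 := by
        apply rootMultiplicity_eq_zero
        rw [IsRoot, eval_add, eval_X, eval_C]
        intro h
        exact hIs0 (by linear_combination h / 2)
      have hminus2 : rootMultiplicity (-(Complex.I * (s : ℂ)))
          ((X : Polynomial ℂ) - C (Complex.I * s)) = 0 := by
        apply rootMultiplicity_eq_zero
        rw [IsRoot, eval_sub, eval_X, eval_C]
        intro h
        exact hIs0 (by linear_combination -h / 2)
      have hplus2 : rootMultiplicity (-(Complex.I * (s : ℂ)))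
          ((X : Polynomial ℂ) + C (Complex.I * s)) = 1 := by
        have h3 : ((X : Polynomial ℂ) + C (Complex.I * s)) = X - C (-(Complex.I * s)) := by
          rw [map_neg, sub_neg_eq_add]
        rw [h3, rootMultiplicity_X_sub_C_self]
      rw [hmapfac,
        rootMultiplicity_mul (mul_ne_zero hqm0 (mul_ne_zero hx1 hx2)),
        rootMultiplicity_mul (mul_ne_zero hx1 hx2)]
      first
      | rw [hqnr1, rootMultiplicity_X_sub_C_self, hplus1]
      | rw [hqnr2, hminus2, hplus2] }
end
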